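/- arXiv:math-ph/0204023 — 2 statements merged into one kernel-verified Lean document; each statement's English description precedes it below -/
import Mathlib

section
/- Let H be a complex Hilbert space, D ⊆ H a dense subspace, and λ : A → End(D) a linear map from a unital C*-algebra A into linear operators on D such that λ(ab) = λ(a)λ(b), ⟨λ(a)ψ, φ⟩ = ⟨ψ, λ(a*)φ⟩ for all ψ, φ ∈ D, and |⟨λ(c)ψ, ψ⟩| ≤ ‖c‖·‖ψ‖² for all c ∈ A, ψ ∈ D. Then for every a ∈ A and ψ, φ ∈ D, |⟨λ(a)ψ, φ⟩| ≤ ‖a‖·‖ψ‖·‖φ‖; hence λ(a) extends to a bounded operator on H with ‖λ(a)‖ ≤ ‖a‖. -/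
/-- A formally *-preserving multiplicative map satisfying the diagonal bound
extends to bounded operators dominated by the C*-norm. -/
theorem stmt_6 {A H : Type*} [NormedRing A] [StarRing A] [CStarRing A]
    [NormedAlgebra ℂ A] [CompleteSpace A]
    [NormedAddCommGroup H] [InnerProductSpace ℂ H] [CompleteSpace H]
    (D : Submodule ℂ H) (hD : Dense (D : Set H))
    (lam : A →ₗ[ℂ] (D →ₗ[ℂ] D))
    (hmul : ∀ a b : A, lam (a * b) = (lam a).comp (lam b))
    (hadj : ∀ (a : A) (ψ φ : D),
      (inner ℂ ((lam a ψ : D) : H) (φ : H) : ℂ) = inner ℂ (ψ : H) ((lam (star a) φ : D) : H))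
    (hdiag : ∀ (c : A) (ψ : D),
      ‖(inner ℂ ((lam c ψ : D) : H) (ψ : H) : ℂ)‖ ≤ ‖c‖ * ‖(ψ : H)‖ ^ 2) :
    (∀ (a : A) (ψ φ : D),
      ‖(inner ℂ ((lam a ψ : D) : H) (φ : H) : ℂ)‖ ≤ ‖a‖ * ‖(ψ : H)‖ * ‖(φ : H)‖) ∧
    (∀ a : A, ∃ T : H →L[ℂ] H, ‖T‖ ≤ ‖a‖ ∧ ∀ ψ : D, T (ψ : H) = ((lam a ψ : D) : H)) := by
  -- Key bound: ‖λ(a)ψ‖ ≤ ‖a‖ ‖ψ‖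
  have key : ∀ (a : A) (ψ : D), ‖((lam a ψ : D) : H)‖ ≤ ‖a‖ * ‖(ψ : H)‖ := by
    intro a ψ
    have hc : lam (star a) (lam a ψ) = lam (star a * a) ψ := by
      rw [hmul]; rfl
    have hsa : star (star a * a) = star a * a := by
      rw [star_mul, star_star]
    have h1 : (inner ℂ ((lam a ψ : D) : H) ((lam a ψ : D) : H) : ℂ)
        = inner ℂ ((lam (star a * a) ψ : D) : H) (ψ : H) := by
      rw [hadj a ψ (lam a ψ), hc, hadj (star a * a) ψ ψ, hsa]
    have h2 : ‖((lam a ψ : D) : H)‖ ^ 2 ≤ ‖a‖ ^ 2 * ‖(ψ : H)‖ ^ 2 := by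
      have hd := hdiag (star a * a) ψ
      rw [CStarRing.norm_star_mul_self] at hd
      calc ‖((lam a ψ : D) : H)‖ ^ 2
          = ‖(inner ℂ ((lam a ψ : D) : H) ((lam a ψ : D) : H) : ℂ)‖ := by
            rw [inner_self_eq_norm_sq_to_K]
            simp
        _ = ‖(inner ℂ ((lam (star a * a) ψ : D) : H) (ψ : H) : ℂ)‖ := by rw [h1]
        _ ≤ ‖a‖ * ‖a‖ * ‖(ψ : H)‖ ^ 2 := hd
        _ = ‖a‖ ^ 2 * ‖(ψ : H)‖ ^ 2 := by ring
    have h3 : ‖((lam a ψ : D) : H)‖ ^ 2 ≤ (‖a‖ * ‖(ψ : H)‖) ^ 2 := by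
      rw [mul_pow]; exact h2
    exact (pow_le_pow_iff_left₀ (norm_nonneg _) (by positivity) (by norm_num)).mp h3
  constructor
  · intro a ψ φ
    calc ‖(inner ℂ ((lam a ψ : D) : H) (φ : H) : ℂ)‖
        ≤ ‖((lam a ψ : D) : H)‖ * ‖(φ : H)‖ := norm_inner_le_norm _ _
      _ ≤ ‖a‖ * ‖(ψ : H)‖ * ‖(φ : H)‖ := by
          gcongr; exact key a ψ
  · intro a
    -- the map D → H, ψ ↦ λ(a)ψ, as a continuous linear map
    set g : D →ₗ[ℂ] H := D.subtype.comp (lam a) with hg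
    have hgb : ∀ ψ : D, ‖g ψ‖ ≤ ‖a‖ * ‖ψ‖ := fun ψ => key a ψ
    set f : D →L[ℂ] H := g.mkContinuous ‖a‖ hgb with hf
    have hre : DenseRange (D.subtypeL : D →L[ℂ] H) := by
      simpa [DenseRange, Set.range, Submodule.coe_subtypeL] using hD
    have hbound : ∀ x : D, ‖x‖ ≤ (1 : NNReal) * ‖(D.subtypeL : D →L[ℂ] H) x‖ := by
      intro x; simp
    refine ⟨f.extend D.subtypeL, ?_, ?_⟩
    · calc ‖f.extend D.subtypeL‖ ≤ (1 : NNReal) * ‖f‖ :=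
            ContinuousLinearMap.opNorm_extend_le (f := f) (e := D.subtypeL) hre hbound
        _ ≤ ‖a‖ := by
            rw [NNReal.coe_one, one_mul]
            exact g.mkContinuous_norm_le (norm_nonneg a) hgb
    · intro ψ
      exact ContinuousLinearMap.extend_eq (f := f) (e := D.subtypeL) hre
        (ContinuousLinearMap.isUniformEmbedding_of_bound _ hbound).isUniformInducing ψ
end

section
/- Let H be a Hilbert space, L self-adjoint on H with e^{itL} a unitary group, Ω a unit vector with LΩ = 0, and J an anti-unitary involution with JΩ = Ω and J e^{itL} = e^{itL} J. Let a, b be bounded operators on H such that J a* Ω = e^{βL/2} a Ω and J b Ω = e^{βL/2} b* Ω (with aΩ, b*Ω in the domain of e^{βL/2}). Then the function F(t) := ⟨e^{itL} a e^{-itL} b Ω, Ω⟩ satisfies F(t) = ⟨e^{itL} e^{βL/2} a Ω, e^{βL/2} b* Ω⟩ for all t ∈ ℝ. -/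
open Complex

lemma exp_apply_zero_aux {H : Type*} [NormedAddCommGroup H] [InnerProductSpace ℂ H]
    [CompleteSpace H] (L : H →L[ℂ] H) (c : ℂ) (Ω : H) (hLΩ : L Ω = 0) :
    NormedSpace.exp (c • L) Ω = Ω := by
  have hA : (c • L) Ω = 0 := by simp [hLΩ]
  have hs : HasSum (fun n : ℕ => ((Nat.factorial n : ℂ)⁻¹) • (c • L) ^ n)
      (NormedSpace.exp (c • L)) := by
    rw [NormedSpace.exp_eq_tsum (𝕂 := ℂ)]
    exact (NormedSpace.expSeries_summable' (𝕂 := ℂ) (c • L)).hasSum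
  have hs2 : HasSum (fun n : ℕ => (((Nat.factorial n : ℂ)⁻¹) • (c • L) ^ n) Ω)
      (NormedSpace.exp (c • L) Ω) :=
    hs.mapL (ContinuousLinearMap.apply ℂ H Ω)
  have h0 : ∀ n : ℕ, n ≠ 0 → (((Nat.factorial n : ℂ)⁻¹) • (c • L) ^ n) Ω = 0 := by
    intro n hn
    obtain ⟨m, rfl⟩ := Nat.exists_eq_succ_of_ne_zero hn
    simp [pow_succ, ContinuousLinearMap.mul_apply, hLΩ]; exact Or.inr (Or.inr (Function.iterate_fixed (by simp) m))
  have h := hs2.tsum_eq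
  rw [tsum_eq_single 0 h0] at h
  simpa using h.symm

lemma exp_adjoint_aux {H : Type*} [NormedAddCommGroup H] [InnerProductSpace ℂ H]
    [CompleteSpace H] (L : H →L[ℂ] H) (hL : IsSelfAdjoint L) (c : ℂ) :
    ContinuousLinearMap.adjoint (NormedSpace.exp (c • L)) =
      NormedSpace.exp ((starRingEnd ℂ c) • L) := by
  rw [← ContinuousLinearMap.star_eq_adjoint, NormedSpace.star_exp, star_smul,
    hL.star_eq]
  rfl

/-- Algebraic core of the real-time KMS condition via modular data. -/
theorem stmt_12 {H : Type*} [NormedAddCommGroup H] [InnerProductSpace ℂ H]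
    [CompleteSpace H]
    (L : H →L[ℂ] H) (hL : IsSelfAdjoint L) (β : ℝ) (hβ : 0 < β)
    (Ω : H) (hΩnorm : ‖Ω‖ = 1) (hLΩ : L Ω = 0)
    (J : H →ₛₗ[starRingEnd ℂ] H)
    (hJJ : ∀ x : H, J (J x) = x)
    (hJinner : ∀ x y : H, (inner ℂ (J x) (J y) : ℂ) = inner ℂ y x)
    (hJΩ : J Ω = Ω)
    (hJcomm : ∀ (t : ℝ) (x : H),
      J (NormedSpace.exp ((Complex.I * t) • L) x) =
        NormedSpace.exp ((Complex.I * t) • L) (J x))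
    (a b : H →L[ℂ] H)
    (hmod_a : J ((ContinuousLinearMap.adjoint a) Ω) =
      NormedSpace.exp (((β / 2 : ℝ) : ℂ) • L) (a Ω))
    (hmod_b : J (b Ω) =
      NormedSpace.exp (((β / 2 : ℝ) : ℂ) • L) ((ContinuousLinearMap.adjoint b) Ω)) :
    ∀ t : ℝ,
      (inner ℂ (NormedSpace.exp ((Complex.I * t) • L)
          (a (NormedSpace.exp ((-(Complex.I * t)) • L) (b Ω)))) Ω : ℂ) =
      inner ℂ (NormedSpace.exp ((Complex.I * t) • L)
          (NormedSpace.exp (((β / 2 : ℝ) : ℂ) • L) (a Ω)))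
        (NormedSpace.exp (((β / 2 : ℝ) : ℂ) • L) ((ContinuousLinearMap.adjoint b) Ω)) := by
  intro t
  set U : H →L[ℂ] H := NormedSpace.exp ((Complex.I * t) • L) with hU
  set E : H →L[ℂ] H := NormedSpace.exp ((-(Complex.I * t)) • L) with hE
  set M : H →L[ℂ] H := NormedSpace.exp (((β / 2 : ℝ) : ℂ) • L) with hM
  -- conjugates
  have hconj1 : starRingEnd ℂ (Complex.I * t) = -(Complex.I * t) := by
    simp [Complex.conj_ofReal, mul_comm]
  have hconj2 : starRingEnd ℂ (-(Complex.I * t)) = Complex.I * t := by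
    rw [map_neg, hconj1, neg_neg]
  have hUadj : ContinuousLinearMap.adjoint U = E := by
    rw [hU, hE, exp_adjoint_aux L hL, hconj1]
  have hEadj : ContinuousLinearMap.adjoint E = U := by
    rw [hU, hE, exp_adjoint_aux L hL, hconj2]
  -- E Ω = Ω
  have hEΩ : E Ω = Ω := exp_apply_zero_aux L _ Ω hLΩ
  -- J commutes with E
  have hJE : ∀ x : H, J (E x) = E (J x) := by
    intro x
    have h := hJcomm (-t) x
    have hcast : (Complex.I * ((-t : ℝ) : ℂ)) = -(Complex.I * t) := by
      push_cast; ring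
    rw [hcast] at h
    exact h
  calc (inner ℂ (U (a (E (b Ω)))) Ω : ℂ)
      = inner ℂ (a (E (b Ω))) (ContinuousLinearMap.adjoint U Ω) :=
        (ContinuousLinearMap.adjoint_inner_right U _ _).symm
    _ = inner ℂ (a (E (b Ω))) Ω := by rw [hUadj, hEΩ]
    _ = inner ℂ (E (b Ω)) (ContinuousLinearMap.adjoint a Ω) :=
        (ContinuousLinearMap.adjoint_inner_right a _ _).symm
    _ = inner ℂ (J (ContinuousLinearMap.adjoint a Ω)) (J (E (b Ω))) :=
        (hJinner _ _).symm
    _ = inner ℂ (M (a Ω)) (E (M (ContinuousLinearMap.adjoint b Ω))) := by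
        rw [hmod_a, hJE, hmod_b]
    _ = inner ℂ (ContinuousLinearMap.adjoint E (M (a Ω)))
          (M (ContinuousLinearMap.adjoint b Ω)) :=
        (ContinuousLinearMap.adjoint_inner_left E _ _).symm
    _ = inner ℂ (U (M (a Ω))) (M (ContinuousLinearMap.adjoint b Ω)) := by rw [hEadj]
end
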